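/- arXiv:2411.18584 — 3 statements merged into one kernel-verified Lean document; each statement's English description precedes it below -/
import Mathlib

section
/- Let 1 ≤ i ≤ j ≤ n−1, let w ∈ D_n, and let L be an ordered list of distinct elements of ±[n] containing none of i, i+1, …, j+1. Then (s_i s_{i+1}⋯s_j) ⋆ h_{j+1, L}(w) = h_{i, [i+1, …, j+1] ++ (s_i⋯s_j)(L)}( (s_i⋯s_j)·w ), where ⋆ on the left denotes the letterwise extended Demazure action, ++ is concatenation of lists, and (s_i⋯s_j)·w is the ordinary product. -/
open Equiv

/-- The key of `a : ℤ` in the total order `1 < 2 < ⋯ < n < -n < ⋯ < -2 < -1` on `±[n]`: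
elements of `±[n]` get the keys `1, …, 2n` (in order); anything else gets key `2n+1`. -/
def dkey (n : ℕ) (a : ℤ) : ℤ :=
  if 1 ≤ a ∧ a ≤ (n : ℤ) then a
  else if -(n : ℤ) ≤ a ∧ a ≤ -1 then 2 * n + 1 + a
  else 2 * n + 1

/-- `a < b` in the total order `1 < 2 < ⋯ < n < -n < ⋯ < -2 < -1` on `±[n]`. -/
def dlt (n : ℕ) (a b : ℤ) : Prop := dkey n a < dkey n b

instance (n : ℕ) (a b : ℤ) : Decidable (dlt n a b) :=
  inferInstanceAs (Decidable (dkey n a < dkey n b))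

/-- `a` is an element of `±[n] = {1,…,n} ∪ {-1,…,-n}`. -/
def inPM (n : ℕ) (a : ℤ) : Prop := a ≠ 0 ∧ |a| ≤ (n : ℤ)

instance (n : ℕ) (a : ℤ) : Decidable (inPM n a) :=
  inferInstanceAs (Decidable (a ≠ 0 ∧ |a| ≤ (n : ℤ)))

/-- The element of `±[n]` whose key is `k` (for `1 ≤ k ≤ 2n`). -/
def ofKey (n : ℕ) (k : ℤ) : ℤ := if k ≤ (n : ℤ) then k else k - (2 * n + 1)

/-- A signed permutation of `±[n]`, viewed as a permutation of `ℤ`: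
it commutes with negation and fixes everything outside `±[n]`. -/
def IsSignedPerm (n : ℕ) (w : Perm ℤ) : Prop :=
  (∀ a : ℤ, w (-a) = -(w a)) ∧ ∀ a : ℤ, (n : ℤ) < |a| → w a = a

/-- An even signed permutation of `±[n]`, i.e. an element of the group `D_n`. -/
def IsEvenSignedPerm (n : ℕ) (w : Perm ℤ) : Prop :=
  IsSignedPerm n w ∧ Even ((Finset.Icc (1 : ℤ) (n : ℤ)).filter fun i => w i < 0).card

/-- The simple generators `s_1, …, s_n` of `D_n`:  for `1 ≤ i ≤ n-1`, `s_i` exchanges the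
values `i ↔ i+1` and `-i ↔ -(i+1)`;  `s_n` exchanges the values `n-1 ↔ -n` and `n ↔ -(n-1)`. -/
def sgen (n i : ℕ) : Perm ℤ :=
  if i = n then Equiv.swap ((n : ℤ) - 1) (-(n : ℤ)) * Equiv.swap (n : ℤ) (-((n : ℤ) - 1))
  else Equiv.swap (i : ℤ) ((i : ℤ) + 1) * Equiv.swap (-(i : ℤ)) (-((i : ℤ) + 1))

/-- The product `s_{l₁} s_{l₂} ⋯ s_{l_k}` of the word `l = [l₁, …, l_k]`. -/
def wordProd (n : ℕ) (l : List ℕ) : Perm ℤ := (l.map (sgen n)).prod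

/-- The Coxeter length of `w ∈ D_n`: the least length of a word in `s_1, …, s_n` whose
product is `w`. -/
noncomputable def DLength (n : ℕ) (w : Perm ℤ) : ℕ :=
  sInf {k | ∃ l : List ℕ, (∀ i ∈ l, 1 ≤ i ∧ i ≤ n) ∧ l.length = k ∧ wordProd n l = w}

/-- `dem` is the Demazure product of the Coxeter group `D_n`: the (unique) associative
product on `D_n`, with identity `id`, such that for each simple generator `s` and `u ∈ D_n`,
`s ⋆ u = s·u` if `ℓ(s·u) > ℓ(u)`, and `s ⋆ u = u` if `ℓ(s·u) < ℓ(u)`. -/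
def IsDemazure (n : ℕ) (dem : Perm ℤ → Perm ℤ → Perm ℤ) : Prop :=
  (∀ u v, IsEvenSignedPerm n u → IsEvenSignedPerm n v → IsEvenSignedPerm n (dem u v)) ∧
  (∀ u v w, IsEvenSignedPerm n u → IsEvenSignedPerm n v → IsEvenSignedPerm n w →
      dem (dem u v) w = dem u (dem v w)) ∧
  (∀ u, IsEvenSignedPerm n u → dem 1 u = u ∧ dem u 1 = u) ∧
  (∀ i, 1 ≤ i → i ≤ n → ∀ u, IsEvenSignedPerm n u →
      (DLength n u < DLength n (sgen n i * u) → dem (sgen n i) u = sgen n i * u) ∧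
      (DLength n (sgen n i * u) < DLength n u → dem (sgen n i) u = u))

/-- The swap performed in one step of the hopping procedure: exchange the values `t ↔ q`
and simultaneously `-t ↔ -q` (unless `t = -q`). -/
def hswap (t q : ℤ) : Perm ℤ :=
  if t = -q then Equiv.swap t q else Equiv.swap t q * Equiv.swap (-t) (-q)

/-- `q` is eligible for hopping `t` in `w`: `q ∈ ±[n]`, `q > t` in the order on `±[n]`,
and `q` occurs strictly to the right of `t` in the unfolding of `w`. -/
def HopStep (n : ℕ) (w : Perm ℤ) (t q : ℤ) : Prop :=
  inPM n q ∧ dlt n t q ∧ dkey n (w⁻¹ t) < dkey n (w⁻¹ q) ∧ dkey n (w⁻¹ q) ≤ 2 * n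

instance (n : ℕ) (w : Perm ℤ) (t q : ℤ) : Decidable (HopStep n w t q) :=
  inferInstanceAs (Decidable
    (inPM n q ∧ dlt n t q ∧ dkey n (w⁻¹ t) < dkey n (w⁻¹ q) ∧ dkey n (w⁻¹ q) ≤ 2 * n))

theorem hop_measure (n : ℕ) (w : Perm ℤ) (t q : ℤ) (h : HopStep n w t q) :
    (2 * (n : ℤ) + 1 - dkey n ((hswap t q * w)⁻¹ t)).toNat
      < (2 * (n : ℤ) + 1 - dkey n (w⁻¹ t)).toNat := by
  obtain ⟨⟨hq0, _⟩, _, hlt, hle⟩ := h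
  have key : (hswap t q * w)⁻¹ t = w⁻¹ q := by
    have hs : (hswap t q)⁻¹ t = q := by
      unfold hswap
      split_ifs with he
      · subst he
        simp [Equiv.swap_inv, Equiv.swap_apply_left]
      · have h1 : q ≠ -t := fun hc => he (by omega)
        have h2 : q ≠ -q := fun hc => hq0 (by omega)
        simp [mul_inv_rev, Equiv.swap_inv, Equiv.Perm.mul_apply, Equiv.swap_apply_left,
          Equiv.swap_apply_of_ne_of_ne h1 h2]
    rw [mul_inv_rev, Equiv.Perm.mul_apply, hs]
  rw [key]
  omega

/-- The hopping operator `h_{t,L}`: repeatedly pick the element `q` of `L`, occurring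
latest in `L`, among those greater than `t` occurring strictly to the right of `t` in
the unfolding of `w`; swap the values `t ↔ q` (and `-t ↔ -q`, unless `t = -q`); stop
when no such `q` exists. -/
def hop (n : ℕ) (t : ℤ) (L : List ℤ) (w : Perm ℤ) : Perm ℤ :=
  match h : L.reverse.find? (fun q => decide (HopStep n w t q)) with
  | none => w
  | some q => hop n t L (hswap t q * w)
termination_by (2 * (n : ℤ) + 1 - dkey n (w⁻¹ t)).toNat
decreasing_by
  have hq := List.find?_some h
  simp only [decide_eq_true_eq] at hq
  exact hop_measure n w t q hq

/-- The unfolding `[w(1), …, w(n), -w(n), …, -w(1)]` of a signed permutation `w`. -/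
def unfoldList (n : ℕ) (w : Perm ℤ) : List ℤ :=
  (List.range (2 * n)).map fun p => w (ofKey n ((p : ℤ) + 1))

/-- `w ↖ t`: the ordered list of entries of the unfolding of `w` occurring strictly to the
left of the value `t` and lying strictly between `t` and `-t` in the order on `±[n]`. -/
def liftD (n : ℕ) (w : Perm ℤ) (t : ℤ) : List ℤ :=
  ((unfoldList n w).take (dkey n (w⁻¹ t) - 1).toNat).filter
    fun a => decide (dlt n t a ∧ dlt n a (-t))

/-- `L ∼ₜ L'` : the hopping operators `h_{t,L}` and `h_{t,L'}` agree on all of `D_n`. -/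
def HopEquiv (n : ℕ) (t : ℤ) (L L' : List ℤ) : Prop :=
  ∀ u : Perm ℤ, IsEvenSignedPerm n u → hop n t L u = hop n t L' u

/-- The list `[a, a+1, …, b]` (as integers). -/
def listUp (a b : ℕ) : List ℤ := (List.range (b + 1 - a)).map fun k => (a : ℤ) + k

/-- The list `[-b, -(b-1), …, -a]` (as integers). -/
def listNegUp (a b : ℕ) : List ℤ := (List.range (b + 1 - a)).map fun k => -(b : ℤ) + k

/-- For `1 ≤ i ≤ n-2` : `Q` is one of the minimal coset representatives
(form 0: `id`; form 1: `s_i ⋯ s_j`; form 2: `s_i ⋯ s_{n-2} s_n s_{n-1} ⋯ s_j`;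
form 3: `s_i ⋯ s_{n-2} s_n`). -/
def QForm (n i : ℕ) (Q : Perm ℤ) : Prop :=
  Q = 1 ∨
  (∃ j, i ≤ j ∧ j ≤ n - 1 ∧ Q = wordProd n (List.range' i (j + 1 - i))) ∨
  (∃ j, i ≤ j ∧ j ≤ n - 1 ∧
    Q = wordProd n (List.range' i (n - 1 - i) ++ [n] ++ (List.range' j (n - j)).reverse)) ∨
  Q = wordProd n (List.range' i (n - 1 - i) ++ [n])

/-- `Q` is one of the four elements `id`, `s_{n-1}`, `s_n s_{n-1}`, `s_n` of
`W_{{s_{n-1}, s_n}}`. -/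
def QFormTop (n : ℕ) (Q : Perm ℤ) : Prop :=
  Q = 1 ∨ Q = sgen n (n - 1) ∨ Q = sgen n n * sgen n (n - 1) ∨ Q = sgen n n

/-- For `1 ≤ i ≤ n-2`: `(Q, L)` is a factor of a parabolic factorization together with
its associated list `L_i`. -/
def QList (n i : ℕ) (Q : Perm ℤ) (L : List ℤ) : Prop :=
  (Q = 1 ∧ L = []) ∨
  (∃ j, i ≤ j ∧ j ≤ n - 1 ∧ Q = wordProd n (List.range' i (j + 1 - i)) ∧
    L = listUp (i + 1) (j + 1)) ∨
  (∃ j, i ≤ j ∧ j ≤ n - 1 ∧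
    Q = wordProd n (List.range' i (n - 1 - i) ++ [n] ++ (List.range' j (n - j)).reverse) ∧
    L = listUp (i + 1) n ++ listNegUp (j + 1) n) ∨
  (Q = wordProd n (List.range' i (n - 1 - i) ++ [n]) ∧
    L = listUp (i + 1) (n - 1) ++ [-(n : ℤ)])

/-- `(Q, L)` is the top factor `Q_{n-1}` of a parabolic factorization together with its
associated list `L_{n-1}`. -/
def QListTop (n : ℕ) (Q : Perm ℤ) (L : List ℤ) : Prop :=
  (Q = 1 ∧ L = []) ∨ (Q = sgen n (n - 1) ∧ L = [(n : ℤ)]) ∨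
  (Q = sgen n n * sgen n (n - 1) ∧ L = [(n : ℤ), -(n : ℤ)]) ∨
  (Q = sgen n n ∧ L = [-(n : ℤ)])

/-- The partial product `Q_{n-1} Q_{n-2} ⋯ Q_k` of a parabolic factorization. -/
def prodQ (n : ℕ) (Q : ℕ → Perm ℤ) (k : ℕ) : Perm ℤ :=
  (((List.range' k (n - k)).reverse).map Q).prod

/-- The letterwise extended Demazure action of the generator `s_i` (for `1 ≤ i ≤ n-1`) on an
arbitrary signed permutation: `s_i ⋆ u = s_i·u` if the value `i` occurs strictly to the left
of the value `i+1` in the unfolding of `u`, and `u` otherwise. -/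
def demStep (n i : ℕ) (u : Perm ℤ) : Perm ℤ :=
  if dkey n (u⁻¹ (i : ℤ)) < dkey n (u⁻¹ ((i : ℤ) + 1)) then sgen n i * u else u

/-- The letterwise extended Demazure action of a word:
`(s_{a₁} ⋯ s_{a_k}) ⋆ u = s_{a₁} ⋆ (s_{a₂} ⋆ (⋯ (s_{a_k} ⋆ u)))`. -/
def demWord (n : ℕ) (l : List ℕ) (u : Perm ℤ) : Perm ℤ := l.foldr (demStep n) u

/-- A member of the symmetric group on `±[n]`, viewed as a permutation of `ℤ`:
it fixes `0` and everything of absolute value `> n`. -/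
def IsPermPM (n : ℕ) (w : Perm ℤ) : Prop := ∀ a : ℤ, a = 0 ∨ (n : ℤ) < |a| → w a = a

/-- The simple generators of the symmetric group on `±[n]` (type `A_{2n-1}`):
`agen n k` (for `1 ≤ k ≤ 2n-1`) transposes the order-adjacent elements of `±[n]`
with keys `k` and `k+1`. -/
def agen (n k : ℕ) : Perm ℤ := Equiv.swap (ofKey n (k : ℤ)) (ofKey n ((k : ℤ) + 1))

/-- The Coxeter length of an element of the symmetric group on `±[n]`. -/
noncomputable def ALength (n : ℕ) (w : Perm ℤ) : ℕ :=
  sInf {k | ∃ l : List ℕ, (∀ i ∈ l, 1 ≤ i ∧ i ≤ 2 * n - 1) ∧ l.length = k ∧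
    (l.map (agen n)).prod = w}

/-- `dem` is the Demazure product of the symmetric group on `±[n]`, viewed as a Coxeter
group of type `A_{2n-1}` with simple generators the transpositions of order-adjacent
elements of `±[n]`. -/
def IsDemazureA (n : ℕ) (dem : Perm ℤ → Perm ℤ → Perm ℤ) : Prop :=
  (∀ u v, IsPermPM n u → IsPermPM n v → IsPermPM n (dem u v)) ∧
  (∀ u v w, IsPermPM n u → IsPermPM n v → IsPermPM n w →
      dem (dem u v) w = dem u (dem v w)) ∧
  (∀ u, IsPermPM n u → dem 1 u = u ∧ dem u 1 = u) ∧
  (∀ k, 1 ≤ k → k ≤ 2 * n - 1 → ∀ u, IsPermPM n u →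
      (ALength n u < ALength n (agen n k * u) → dem (agen n k) u = agen n k * u) ∧
      (ALength n (agen n k * u) < ALength n u → dem (agen n k) u = u))


-- ===== toolbox =====

lemma inPM_iff (n : ℕ) (a : ℤ) : inPM n a ↔ (1 ≤ a ∧ a ≤ (n:ℤ)) ∨ (-(n:ℤ) ≤ a ∧ a ≤ -1) := by
  unfold inPM; rw [abs_le]; omega

lemma dkey_pos' (n : ℕ) (a : ℤ) (h1 : 1 ≤ a) (h2 : a ≤ (n:ℤ)) : dkey n a = a := by
  unfold dkey; split_ifs <;> omega

lemma dkey_neg' (n : ℕ) (a : ℤ) (h1 : -(n:ℤ) ≤ a) (h2 : a ≤ -1) : dkey n a = 2*n+1+a := by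
  unfold dkey; split_ifs <;> omega

lemma dkey_bounds (n : ℕ) (a : ℤ) (h : inPM n a) : 1 ≤ dkey n a ∧ dkey n a ≤ 2*n := by
  rw [inPM_iff] at h; unfold dkey; split_ifs <;> omega

lemma dkey_le_iff (n : ℕ) (a : ℤ) : dkey n a ≤ 2*n ↔ inPM n a := by
  rw [inPM_iff]; unfold dkey; split_ifs <;> omega

lemma dkey_inj (n : ℕ) (a b : ℤ) (ha : inPM n a) (hb : inPM n b) (h : dkey n a = dkey n b) :
    a = b := by
  rw [inPM_iff] at ha hb; unfold dkey at h; split_ifs at h <;> omega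

lemma dkey_neg (n : ℕ) (a : ℤ) (h : inPM n a) : dkey n (-a) = 2*n+1 - dkey n a := by
  rw [inPM_iff] at h; unfold dkey; split_ifs <;> omega

-- signed perms
lemma sp_one (n : ℕ) : IsSignedPerm n 1 := ⟨fun a => rfl, fun a _ => rfl⟩

lemma sp_mul (n : ℕ) {u v : Perm ℤ} (hu : IsSignedPerm n u) (hv : IsSignedPerm n v) :
    IsSignedPerm n (u * v) := by
  constructor
  · intro a; simp [Perm.mul_apply, hv.1 a, hu.1 (v a)]
  · intro a ha; simp [Perm.mul_apply, hv.2 a ha, hu.2 a ha]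

lemma sp_inv (n : ℕ) {w : Perm ℤ} (hw : IsSignedPerm n w) : IsSignedPerm n w⁻¹ := by
  constructor
  · intro a
    apply w.injective
    rw [show ∀ x, w (w⁻¹ x) = x from w.apply_symm_apply, hw.1, show ∀ x, w (w⁻¹ x) = x from w.apply_symm_apply]
  · intro a ha
    apply w.injective
    rw [show ∀ x, w (w⁻¹ x) = x from w.apply_symm_apply, hw.2 a ha]

lemma sp_zero (n : ℕ) {w : Perm ℤ} (hw : IsSignedPerm n w) : w 0 = 0 := by
  have := hw.1 0
  simp at this
  omega

lemma sp_mem (n : ℕ) {w : Perm ℤ} (hw : IsSignedPerm n w) {a : ℤ} (ha : inPM n a) :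
    inPM n (w a) := by
  obtain ⟨h0, hle⟩ := ha
  constructor
  · intro h
    exact h0 (w.injective (by rw [h, sp_zero n hw]))
  · by_contra h
    push_neg at h
    have := hw.2 (w a) h
    have : w a = a := w.injective this
    rw [this] at h
    omega

lemma sp_pos_le (n : ℕ) {w : Perm ℤ} (hw : IsSignedPerm n w) {a : ℤ} (ha : inPM n a) :
    dkey n (w⁻¹ a) ≤ 2*n := by
  rw [dkey_le_iff]; exact sp_mem n (sp_inv n hw) ha

lemma sp_pos_neg (n : ℕ) {w : Perm ℤ} (hw : IsSignedPerm n w) {a : ℤ} (ha : inPM n a) :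
    dkey n (w⁻¹ (-a)) = 2*n+1 - dkey n (w⁻¹ a) := by
  rw [(sp_inv n hw).1 a, dkey_neg n _ (sp_mem n (sp_inv n hw) ha)]

lemma sp_pos_inj (n : ℕ) {w : Perm ℤ} (hw : IsSignedPerm n w) {a b : ℤ}
    (ha : inPM n a) (hb : inPM n b) (h : dkey n (w⁻¹ a) = dkey n (w⁻¹ b)) : a = b := by
  have := dkey_inj n _ _ (sp_mem n (sp_inv n hw) ha) (sp_mem n (sp_inv n hw) hb) h
  exact w⁻¹.injective this

-- sgen
lemma sgen_apply (n i : ℕ) (h1 : 1 ≤ i) (h2 : i < n) (a : ℤ) :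
    sgen n i a = if a = (i:ℤ) then (i:ℤ)+1 else if a = (i:ℤ)+1 then (i:ℤ)
      else if a = -(i:ℤ) then -((i:ℤ)+1) else if a = -((i:ℤ)+1) then -(i:ℤ) else a := by
  unfold sgen
  rw [if_neg (by omega)]
  rw [Perm.mul_apply]
  split_ifs with k1 k2 k3 k4
  · subst k1
    rw [show (Equiv.swap (-(i:ℤ)) (-((i:ℤ)+1))) (i:ℤ) = (i:ℤ) from
      Equiv.swap_apply_of_ne_of_ne (by omega) (by omega), Equiv.swap_apply_left]
  · subst k2
    rw [show (Equiv.swap (-(i:ℤ)) (-((i:ℤ)+1))) ((i:ℤ)+1) = ((i:ℤ)+1) from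
      Equiv.swap_apply_of_ne_of_ne (by omega) (by omega), Equiv.swap_apply_right]
  · subst k3
    rw [Equiv.swap_apply_left, Equiv.swap_apply_of_ne_of_ne (by omega) (by omega)]
  · subst k4
    rw [Equiv.swap_apply_right, Equiv.swap_apply_of_ne_of_ne (by omega) (by omega)]
  · rw [Equiv.swap_apply_of_ne_of_ne k3 k4, Equiv.swap_apply_of_ne_of_ne k1 k2]

lemma sgen_signed (n i : ℕ) (h1 : 1 ≤ i) (h2 : i < n) : IsSignedPerm n (sgen n i) := by
  constructor
  · intro a
    simp only [sgen_apply n i h1 h2]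
    split_ifs <;> omega
  · intro a ha
    rcases lt_abs.mp ha with h | h <;>
    · simp only [sgen_apply n i h1 h2]
      split_ifs <;> omega

lemma sgen_sq (n i : ℕ) (h1 : 1 ≤ i) (h2 : i < n) : sgen n i * sgen n i = 1 := by
  ext a
  simp only [Perm.mul_apply, sgen_apply n i h1 h2, Perm.one_apply]
  split_ifs <;> omega

lemma sgen_inv (n i : ℕ) (h1 : 1 ≤ i) (h2 : i < n) : (sgen n i)⁻¹ = sgen n i :=
  inv_eq_of_mul_eq_one_left (sgen_sq n i h1 h2)

-- hswap
lemma hswap_apply (t q a : ℤ) (ht0 : t ≠ 0) (hq0 : q ≠ 0) (htq : t ≠ q) :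
    hswap t q a = if a = t then q else if a = q then t
      else if a = -t then -q else if a = -q then -t else a := by
  unfold hswap
  by_cases he : t = -q
  · rw [if_pos he]
    split_ifs with k1 k2 k3 k4
    · rw [k1]; exact Equiv.swap_apply_left t q
    · rw [k2]; exact Equiv.swap_apply_right t q
    · omega
    · omega
    · exact Equiv.swap_apply_of_ne_of_ne k1 k2
  · rw [if_neg he]
    split_ifs with k1 k2 k3 k4
    · rw [k1]
      rw [Perm.mul_apply, show (Equiv.swap (-t) (-q)) t = t from
        Equiv.swap_apply_of_ne_of_ne (by omega) (by omega), Equiv.swap_apply_left]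
    · rw [k2]
      rw [Perm.mul_apply, show (Equiv.swap (-t) (-q)) q = q from
        Equiv.swap_apply_of_ne_of_ne (by omega) (by omega), Equiv.swap_apply_right]
    · rw [k3]
      rw [Perm.mul_apply, Equiv.swap_apply_left,
        Equiv.swap_apply_of_ne_of_ne (by omega) (by omega)]
    · rw [k4]
      rw [Perm.mul_apply, Equiv.swap_apply_right,
        Equiv.swap_apply_of_ne_of_ne (by omega) (by omega)]
    · rw [Perm.mul_apply, Equiv.swap_apply_of_ne_of_ne k3 k4,
        Equiv.swap_apply_of_ne_of_ne k1 k2]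

lemma hswap_signed (n : ℕ) {t q : ℤ} (ht : inPM n t) (hq : inPM n q) (htq : t ≠ q) :
    IsSignedPerm n (hswap t q) := by
  have ht' := (inPM_iff n t).mp ht
  have hq' := (inPM_iff n q).mp hq
  constructor
  · intro a
    simp only [hswap_apply t q _ ht.1 hq.1 htq]
    split_ifs <;> omega
  · intro a ha
    rcases lt_abs.mp ha with h | h <;>
    · simp only [hswap_apply t q _ ht.1 hq.1 htq]
      split_ifs <;> omega

lemma hswap_conj (σ : Perm ℤ) (hneg : ∀ a, σ (-a) = -σ a) (t q : ℤ) :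
    σ * hswap t q * σ⁻¹ = hswap (σ t) (σ q) := by
  have h1 : σ t = -σ q ↔ t = -q := by
    rw [← hneg q]
    exact ⟨fun h => σ.injective h, fun h => by rw [h]⟩
  unfold hswap
  split_ifs with h h' h'
  · exact (Equiv.swap_apply_apply σ t q).symm
  · exact absurd (h1.mpr h) h'
  · exact absurd (h1.mp h') h
  · rw [← hneg, ← hneg, Equiv.swap_apply_apply, Equiv.swap_apply_apply]
    group

lemma hswap_mul_eq (σ : Perm ℤ) (hneg : ∀ a, σ (-a) = -σ a) (t q : ℤ) :
    hswap (σ t) (σ q) * σ = σ * hswap t q := by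
  rw [← hswap_conj σ hneg t q]
  group

-- hop unfolding
lemma hop_none (n : ℕ) (t : ℤ) (L : List ℤ) (w : Perm ℤ)
    (h : L.reverse.find? (fun q => decide (HopStep n w t q)) = none) : hop n t L w = w := by
  unfold hop
  split
  · rfl
  · rename_i q hq
    rw [h] at hq
    exact absurd hq (by simp)

lemma hop_some (n : ℕ) (t : ℤ) (L : List ℤ) (w : Perm ℤ) (q : ℤ)
    (h : L.reverse.find? (fun q => decide (HopStep n w t q)) = some q) :
    hop n t L w = hop n t L (hswap t q * w) := by
  conv_lhs => unfold hop
  split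
  · rename_i hq
    rw [h] at hq
    exact absurd hq (by simp)
  · rename_i q' hq
    rw [h] at hq
    cases hq
    rfl

-- find? helper
lemma find?_map_congr {α β : Type} (f : α → β) (p : β → Bool) (q : α → Bool) :
    ∀ l : List α, (∀ a ∈ l, p (f a) = q a) → (l.map f).find? p = (l.find? q).map f := by
  intro l
  induction l with
  | nil => simp
  | cons a l ih =>
    intro h
    simp only [List.map_cons, List.find?_cons, h a List.mem_cons_self]
    cases hq : q a
    · simp only [ih fun b hb => h b (List.mem_cons_of_mem a hb)]
    · rfl

lemma pm_i (n i : ℕ) (h1 : 1 ≤ i) (h2 : i < n) : inPM n (i:ℤ) := (inPM_iff n _).mpr (by omega)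
lemma pm_i1 (n i : ℕ) (h2 : i < n) : inPM n ((i:ℤ)+1) := (inPM_iff n _).mpr (by omega)
lemma pm_ni (n i : ℕ) (h1 : 1 ≤ i) (h2 : i < n) : inPM n (-(i:ℤ)) := (inPM_iff n _).mpr (by omega)
lemma pm_ni1 (n i : ℕ) (h2 : i < n) : inPM n (-((i:ℤ)+1)) := (inPM_iff n _).mpr (by omega)

lemma dlt_corr (n i : ℕ) (h1 : 1 ≤ i) (h2 : i < n) {q : ℤ} (hq : inPM n q) (hq1 : q ≠ (i:ℤ)) (hq2 : q ≠ (i:ℤ)+1) :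
    dlt n (i:ℤ) (sgen n i q) ↔ dlt n ((i:ℤ)+1) q := by
  have di := dkey_pos' n (i:ℤ) (by omega) (by omega)
  have di1 := dkey_pos' n ((i:ℤ)+1) (by omega) (by omega)
  have dni := dkey_neg' n (-(i:ℤ)) (by omega) (by omega)
  have dni1 := dkey_neg' n (-((i:ℤ)+1)) (by omega) (by omega)
  have hq' := (inPM_iff n q).mp hq
  rcases eq_or_ne q (-(i:ℤ)) with rfl | hq3
  · rw [show sgen n i (-(i:ℤ)) = -((i:ℤ)+1) by rw [sgen_apply n i h1 h2]; split_ifs <;> omega]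
    unfold dlt
    omega
  rcases eq_or_ne q (-((i:ℤ)+1)) with rfl | hq4
  · rw [show sgen n i (-((i:ℤ)+1)) = -(i:ℤ) by rw [sgen_apply n i h1 h2]; split_ifs <;> omega]
    unfold dlt
    omega
  · rw [show sgen n i q = q by rw [sgen_apply n i h1 h2]; split_ifs <;> omega]
    unfold dlt
    unfold dkey
    split_ifs <;> omega

lemma corr1 (n i : ℕ) (h1 : 1 ≤ i) (h2 : i < n) {v : Perm ℤ} (hv : IsSignedPerm n v) {q : ℤ} (hq : inPM n q)
    (hq1 : q ≠ (i:ℤ)) (hq2 : q ≠ (i:ℤ)+1) :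
    HopStep n (sgen n i * v) (i:ℤ) (sgen n i q) ↔ HopStep n v ((i:ℤ)+1) q := by
  have hsq : inPM n (sgen n i q) := sp_mem n (sgen_signed n i h1 h2) hq
  have e1 : (sgen n i * v)⁻¹ (i:ℤ) = v⁻¹ ((i:ℤ)+1) := by
    rw [mul_inv_rev, Perm.mul_apply, sgen_inv n i h1 h2,
      show sgen n i (i:ℤ) = (i:ℤ)+1 by rw [sgen_apply n i h1 h2]; split_ifs <;> omega]
  have e2 : (sgen n i * v)⁻¹ (sgen n i q) = v⁻¹ q := by
    rw [mul_inv_rev, Perm.mul_apply, sgen_inv n i h1 h2,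
      ← Perm.mul_apply (sgen n i) (sgen n i), sgen_sq n i h1 h2, Perm.one_apply]
  unfold HopStep
  rw [e1, e2, dlt_corr n i h1 h2 hq hq1 hq2]
  simp [hq, hsq]

lemma corr2 (n i : ℕ) (h1 : 1 ≤ i) (h2 : i < n) {v : Perm ℤ} (hv : IsSignedPerm n v) {q : ℤ} (hq : inPM n q)
    (hq1 : q ≠ (i:ℤ)) (hq2 : q ≠ (i:ℤ)+1)
    (hB : dkey n (v⁻¹ ((i:ℤ)+1)) < dkey n (v⁻¹ (i:ℤ)))
    (hne : ¬ HopStep n v ((i:ℤ)+1) q) :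
    ¬ HopStep n v (i:ℤ) (sgen n i q) := by
  have di := dkey_pos' n (i:ℤ) (by omega) (by omega)
  have di1 := dkey_pos' n ((i:ℤ)+1) (by omega) (by omega)
  have dni := dkey_neg' n (-(i:ℤ)) (by omega) (by omega)
  have dni1 := dkey_neg' n (-((i:ℤ)+1)) (by omega) (by omega)
  have hq' := (inPM_iff n q).mp hq
  have hpq := sp_pos_le n hv hq
  have hpi := sp_pos_le n hv (pm_i n i h1 h2)
  have hpi1 := sp_pos_le n hv (pm_i1 n i h2)
  have bq := dkey_bounds n _ (sp_mem n (sp_inv n hv) hq)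
  have bi := dkey_bounds n _ (sp_mem n (sp_inv n hv) (pm_i n i h1 h2))
  have bi1 := dkey_bounds n _ (sp_mem n (sp_inv n hv) (pm_i1 n i h2))
  have pni := sp_pos_neg n hv (pm_i n i h1 h2)
  have pni1 := sp_pos_neg n hv (pm_i1 n i h2)
  rcases eq_or_ne q (-(i:ℤ)) with rfl | hq3
  · rw [show sgen n i (-(i:ℤ)) = -((i:ℤ)+1) by rw [sgen_apply n i h1 h2]; split_ifs <;> omega]
    have h5 : ¬ (dkey n (v⁻¹ ((i:ℤ)+1)) < dkey n (v⁻¹ (-(i:ℤ)))) := fun hc =>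
      hne ⟨pm_ni n i h1 h2, by unfold dlt; omega, hc, sp_pos_le n hv (pm_ni n i h1 h2)⟩
    rintro ⟨-, -, hc, -⟩
    rw [pni1] at hc
    rw [pni] at h5
    omega
  rcases eq_or_ne q (-((i:ℤ)+1)) with rfl | hq4
  · rw [show sgen n i (-((i:ℤ)+1)) = -(i:ℤ) by rw [sgen_apply n i h1 h2]; split_ifs <;> omega]
    have h5 : ¬ (dkey n (v⁻¹ ((i:ℤ)+1)) < dkey n (v⁻¹ (-((i:ℤ)+1)))) := fun hc =>
      hne ⟨pm_ni1 n i h2, by unfold dlt; omega, hc, sp_pos_le n hv (pm_ni1 n i h2)⟩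
    rintro ⟨-, -, hc, -⟩
    rw [pni] at hc
    rw [pni1] at h5
    omega
  · rw [show sgen n i q = q by rw [sgen_apply n i h1 h2]; split_ifs <;> omega]
    rintro ⟨-, hd, hc, -⟩
    have hd' : dlt n ((i:ℤ)+1) q := by
      unfold dlt at hd ⊢
      unfold dkey at hd ⊢
      split_ifs at hd ⊢ <;> omega
    exact hne ⟨hq, hd', by omega, hpq⟩

lemma corr3 (n i : ℕ) (h1 : 1 ≤ i) (h2 : i < n) {v : Perm ℤ} (hv : IsSignedPerm n v) :
    HopStep n (sgen n i * v) (i:ℤ) ((i:ℤ)+1) ↔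
      dkey n (v⁻¹ ((i:ℤ)+1)) < dkey n (v⁻¹ (i:ℤ)) := by
  have di := dkey_pos' n (i:ℤ) (by omega) (by omega)
  have di1 := dkey_pos' n ((i:ℤ)+1) (by omega) (by omega)
  have e1 : (sgen n i * v)⁻¹ (i:ℤ) = v⁻¹ ((i:ℤ)+1) := by
    rw [mul_inv_rev, Perm.mul_apply, sgen_inv n i h1 h2,
      show sgen n i (i:ℤ) = (i:ℤ)+1 by rw [sgen_apply n i h1 h2]; split_ifs <;> omega]
  have e2 : (sgen n i * v)⁻¹ ((i:ℤ)+1) = v⁻¹ (i:ℤ) := by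
    rw [mul_inv_rev, Perm.mul_apply, sgen_inv n i h1 h2,
      show sgen n i ((i:ℤ)+1) = (i:ℤ) by rw [sgen_apply n i h1 h2]; split_ifs <;> omega]
  unfold HopStep
  rw [e1, e2]
  constructor
  · rintro ⟨-, -, hc, -⟩; exact hc
  · intro hc
    exact ⟨pm_i1 n i h2, by unfold dlt; omega, hc, sp_pos_le n hv (pm_i n i h1 h2)⟩


lemma hop_step (n i : ℕ) (h1 : 1 ≤ i) (h2 : i < n)
    (L : List ℤ) (hmem : ∀ a ∈ L, inPM n a) (hL1 : (i:ℤ) ∉ L) (hL2 : ((i:ℤ)+1) ∉ L) :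
    ∀ v : Perm ℤ, IsSignedPerm n v →
    demStep n i (hop n ((i:ℤ)+1) L v) =
      hop n (i:ℤ) (((i:ℤ)+1) :: L.map (sgen n i)) (sgen n i * v) := by
  suffices H : ∀ m : ℕ, ∀ v : Perm ℤ, IsSignedPerm n v →
      (2*(n:ℤ)+1 - dkey n (v⁻¹ ((i:ℤ)+1))).toNat = m →
      demStep n i (hop n ((i:ℤ)+1) L v) =
        hop n (i:ℤ) (((i:ℤ)+1) :: L.map (sgen n i)) (sgen n i * v) by
    exact fun v hv => H _ v hv rfl
  intro m
  induction m using Nat.strong_induction_on with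
  | _ m ih =>
  intro v hv hm
  have hpt : ∀ a ∈ L.reverse,
      (fun q => decide (HopStep n (sgen n i * v) (i:ℤ) q)) (sgen n i a)
      = (fun q => decide (HopStep n v ((i:ℤ)+1) q)) a := by
    intro a ha
    rw [List.mem_reverse] at ha
    simp only [decide_eq_decide]
    exact corr1 n i h1 h2 hv (hmem a ha) (fun h => hL1 (h ▸ ha)) (fun h => hL2 (h ▸ ha))
  have hrev : (((i:ℤ)+1) :: L.map (sgen n i)).reverse
      = (L.reverse.map (sgen n i)) ++ [(i:ℤ)+1] := by
    rw [List.reverse_cons, List.map_reverse]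
  cases hfind : L.reverse.find? (fun q => decide (HopStep n v ((i:ℤ)+1) q)) with
  | some q =>
    have hq : HopStep n v ((i:ℤ)+1) q := by simpa using List.find?_some hfind
    have hqL : q ∈ L := List.mem_reverse.mp (List.mem_of_find?_eq_some hfind)
    rw [hop_some n _ L v q hfind]
    have hfind2 : ((((i:ℤ)+1) :: L.map (sgen n i)).reverse).find?
        (fun q => decide (HopStep n (sgen n i * v) (i:ℤ) q)) = some (sgen n i q) := by
      rw [hrev, List.find?_append, find?_map_congr _ _ _ _ hpt, hfind]
      rfl
    rw [hop_some n _ _ _ _ hfind2]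
    have key : hswap (i:ℤ) (sgen n i q) * (sgen n i * v)
        = sgen n i * (hswap ((i:ℤ)+1) q * v) := by
      have h3 := hswap_mul_eq (sgen n i) (sgen_signed n i h1 h2).1 ((i:ℤ)+1) q
      rw [show sgen n i ((i:ℤ)+1) = (i:ℤ) by
        rw [sgen_apply n i h1 h2]; split_ifs <;> omega] at h3
      rw [← mul_assoc, h3, mul_assoc]
    rw [key]
    have htq : ((i:ℤ)+1) ≠ q := by
      intro h
      subst h
      have := hq.2.1
      unfold dlt at this
      omega
    have hv' : IsSignedPerm n (hswap ((i:ℤ)+1) q * v) :=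
      sp_mul n (hswap_signed n (pm_i1 n i h2) hq.1 htq) hv
    exact ih _ (hm ▸ hop_measure n v ((i:ℤ)+1) q hq) _ hv' rfl
  | none =>
    rw [hop_none n _ L v hfind]
    have hnone : ∀ a ∈ L, ¬ HopStep n v ((i:ℤ)+1) a := by
      intro a ha
      have := List.find?_eq_none.mp hfind a (List.mem_reverse.mpr ha)
      simpa using this
    have hfind2a : (L.reverse.map (sgen n i)).find?
        (fun q => decide (HopStep n (sgen n i * v) (i:ℤ) q)) = none := by
      rw [find?_map_congr _ _ _ _ hpt, hfind]
      rfl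
    have hne : dkey n (v⁻¹ (i:ℤ)) ≠ dkey n (v⁻¹ ((i:ℤ)+1)) := by
      intro h
      have := sp_pos_inj n hv (pm_i n i h1 h2) (pm_i1 n i h2) h
      omega
    by_cases hB : dkey n (v⁻¹ ((i:ℤ)+1)) < dkey n (v⁻¹ (i:ℤ))
    · -- case B
      have hstep : HopStep n (sgen n i * v) (i:ℤ) ((i:ℤ)+1) := (corr3 n i h1 h2 hv).mpr hB
      have hfind2 : ((((i:ℤ)+1) :: L.map (sgen n i)).reverse).find?
          (fun q => decide (HopStep n (sgen n i * v) (i:ℤ) q)) = some ((i:ℤ)+1) := by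
        rw [hrev, List.find?_append, hfind2a, Option.none_or,
          List.find?_cons_of_pos (by simpa using hstep)]
      rw [hop_some n _ _ _ _ hfind2]
      have hsw : hswap (i:ℤ) ((i:ℤ)+1) = sgen n i := by
        unfold hswap sgen
        rw [if_neg (by omega), if_neg (by omega)]
      rw [hsw, ← mul_assoc, sgen_sq n i h1 h2, one_mul]
      rw [hop_none]
      · unfold demStep
        rw [if_neg (by omega)]
      · apply List.find?_eq_none.mpr
        intro x hx
        rw [hrev, List.mem_append] at hx
        simp only [decide_eq_true_eq]
        rcases hx with hx | hx
        · rw [List.mem_map] at hx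
          obtain ⟨a, ha, rfl⟩ := hx
          rw [List.mem_reverse] at ha
          exact corr2 n i h1 h2 hv (hmem a ha) (fun h => hL1 (h ▸ ha))
            (fun h => hL2 (h ▸ ha)) hB (hnone a ha)
        · rw [List.mem_singleton] at hx
          subst hx
          rintro ⟨-, -, hc, -⟩
          omega
    · -- case A
      have hA : dkey n (v⁻¹ (i:ℤ)) < dkey n (v⁻¹ ((i:ℤ)+1)) := by omega
      have hfind2 : ((((i:ℤ)+1) :: L.map (sgen n i)).reverse).find?
          (fun q => decide (HopStep n (sgen n i * v) (i:ℤ) q)) = none := by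
        rw [hrev, List.find?_append, hfind2a, Option.none_or]
        apply List.find?_eq_none.mpr
        intro x hx
        rw [List.mem_singleton] at hx
        subst hx
        simp only [decide_eq_true_eq]
        intro hc
        exact hB ((corr3 n i h1 h2 hv).mp hc)
      rw [hop_none n _ _ _ hfind2]
      unfold demStep
      rw [if_pos hA]

lemma wordProd_cons (n a : ℕ) (l : List ℕ) :
    wordProd n (a :: l) = sgen n a * wordProd n l := by
  simp [wordProd]

lemma wordProd_signed (n : ℕ) (l : List ℕ) (h : ∀ k ∈ l, 1 ≤ k ∧ k < n) :
    IsSignedPerm n (wordProd n l) := by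
  induction l with
  | nil => exact sp_one n
  | cons a l ih =>
    rw [wordProd_cons]
    exact sp_mul n
      (sgen_signed n a (h a List.mem_cons_self).1 (h a List.mem_cons_self).2)
      (ih fun k hk => h k (List.mem_cons_of_mem a hk))

lemma wordProd_fix (n : ℕ) (l : List ℕ) (a : ℤ) (h : ∀ k ∈ l, sgen n k a = a) :
    wordProd n l a = a := by
  induction l with
  | nil => rfl
  | cons b l ih =>
    rw [wordProd_cons, Perm.mul_apply, ih fun k hk => h k (List.mem_cons_of_mem b hk)]
    exact h b List.mem_cons_self

lemma word_val (n : ℕ) : ∀ m c : ℕ, 1 ≤ c → c + m ≤ n →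
    wordProd n (List.range' c m) ((c:ℤ) + (m:ℕ)) = (c:ℤ) := by
  intro m
  induction m with
  | zero => intro c _ _; simp [wordProd]
  | succ m ih =>
    intro c hc hcm
    rw [List.range'_succ, wordProd_cons, Perm.mul_apply]
    have : ((c:ℤ) + ((m+1:ℕ):ℤ)) = ((c+1:ℕ):ℤ) + (m:ℕ) := by push_cast; ring
    rw [this, ih (c+1) (by omega) (by omega)]
    rw [sgen_apply n c hc (by omega)]
    split_ifs <;> omega

lemma flatMap_coe (l : List ℕ) : (l.flatMap fun a => [(a:ℤ)]) = l.map (fun a : ℕ => (a:ℤ)) := by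
  induction l with
  | nil => rfl
  | cons a l ih => simp [List.flatMap_cons]; exact Eq.symm List.map_eq_flatMap

lemma listUp_eq (c d : ℕ) :
    listUp c d = (List.range (d+1-c)).map (fun k : ℕ => (c:ℤ) + (k:ℤ)) := by
  show List.map _ _ = _
  rw [show ((List.range (d+1-c) : List ℕ) : List ℤ)
      = (List.range (d+1-c)).flatMap (fun a => [(a:ℤ)]) from by simp, flatMap_coe, List.map_map]
  rfl

lemma listUp_mem (c d : ℕ) : ∀ a ∈ listUp c d, (c:ℤ) ≤ a ∧ a ≤ (d:ℤ) := by
  intro a ha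
  rw [listUp_eq] at ha
  rw [List.mem_map] at ha
  obtain ⟨k, hk, rfl⟩ := ha
  rw [List.mem_range] at hk
  omega

lemma listUp_cons (c d : ℕ) (h : c ≤ d) :
    listUp c d = ((c:ℕ):ℤ) :: listUp (c+1) d := by
  rw [listUp_eq, listUp_eq]
  rw [show d+1-c = (d+1-(c+1))+1 by omega, List.range_succ_eq_map]
  rw [List.map_cons, List.map_map]
  congr 1
  all_goals first
    | (apply List.map_congr_left
       intro k hk
       show (c:ℤ) + ((k+1 : ℕ):ℤ) = ((c+1:ℕ):ℤ) + (k:ℤ)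
       push_cast
       ring)
    | simp

lemma listUp_nil (c d : ℕ) (h : d < c) : listUp c d = [] := by
  rw [listUp_eq, show d+1-c = 0 by omega]
  rfl

-- the main induction
lemma aux_main (n : ℕ) (hn : 2 ≤ n) :
    ∀ d i j : ℕ, 1 ≤ i → i ≤ j → j ≤ n - 1 → j - i = d →
    ∀ w : Perm ℤ, IsSignedPerm n w →
    ∀ L : List ℤ, (∀ a ∈ L, inPM n a) →
    (∀ k : ℕ, i ≤ k → k ≤ j + 1 → (k:ℤ) ∉ L) →
    demWord n (List.range' i (j + 1 - i)) (hop n ((j : ℤ) + 1) L w)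
      = hop n (i:ℤ)
          (listUp (i + 1) (j + 1) ++ L.map ⇑(wordProd n (List.range' i (j + 1 - i))))
          (wordProd n (List.range' i (j + 1 - i)) * w) := by
  intro d
  induction d with
  | zero =>
    intro i j hi hij hj hd w hw L hmem havoid
    have hji : i = j := by omega
    subst hji
    have hr : List.range' i (i + 1 - i) = [i] := by
      rw [show i+1-i = 1 by omega]
      rfl
    rw [hr]
    have hwp : wordProd n [i] = sgen n i := by simp [wordProd]
    rw [hwp]
    have hup : listUp (i+1) (i+1) = [((i:ℤ)+1)] := by
      rw [listUp_cons (i+1) (i+1) le_rfl, listUp_nil (i+1+1) (i+1) (by omega)]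
      push_cast
      rfl
    rw [hup]
    have hL2 : ((i:ℤ)+1) ∉ L := by
      have := havoid (i+1) (by omega) le_rfl
      push_cast at this
      exact this
    exact hop_step n i hi (by omega) L hmem (havoid i le_rfl (by omega)) hL2 w hw
  | succ d ihd =>
    intro i j hi hij hj hd w hw L hmem havoid
    have hii : i < n := by omega
    set σ' := wordProd n (List.range' (i+1) (j+1-(i+1))) with hσ'
    have hσ's : IsSignedPerm n σ' := by
      apply wordProd_signed
      intro k hk
      rw [List.mem_range'_1] at hk
      omega
    have IH := ihd (i+1) j (by omega) (by omega) hj (by omega) w hw L hmem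
      (fun k hk1 hk2 => havoid k (by omega) hk2)
    have hr : List.range' i (j+1-i) = i :: List.range' (i+1) (j+1-(i+1)) := by
      rw [show j+1-i = (j+1-(i+1))+1 by omega, List.range'_succ]
    rw [hr, wordProd_cons]
    have hdw : ∀ x, demWord n ((i : ℕ) :: List.range' (i+1) (j+1-(i+1))) x
        = demStep n i (demWord n (List.range' (i+1) (j+1-(i+1))) x) := fun _ => rfl
    rw [hdw, IH]
    have hcast : ((i+1:ℕ):ℤ) = (i:ℤ)+1 := by push_cast; ring
    rw [hcast]
    set L₀ := listUp (i+1+1) (j+1) ++ L.map ⇑σ' with hL₀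
    have hσ'i : σ' (i:ℤ) = (i:ℤ) := by
      apply wordProd_fix
      intro k hk
      rw [List.mem_range'_1] at hk
      rw [sgen_apply n k (by omega) (by omega)]
      split_ifs <;> omega
    have hσ'j : σ' ((j:ℤ)+1) = (i:ℤ)+1 := by
      have := word_val n (j+1-(i+1)) (i+1) (by omega) (by omega)
      rw [show ((i+1:ℕ):ℤ) + ((j+1-(i+1):ℕ):ℤ) = (j:ℤ)+1 by push_cast; omega] at this
      rw [← hσ'] at this
      rw [this]
      push_cast
      ring
    have hmem₀ : ∀ a ∈ L₀, inPM n a := by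
      intro a ha
      rw [hL₀, List.mem_append] at ha
      rcases ha with ha | ha
      · have := listUp_mem _ _ a ha
        rw [inPM_iff]
        push_cast at this
        omega
      · rw [List.mem_map] at ha
        obtain ⟨b, hb, rfl⟩ := ha
        exact sp_mem n hσ's (hmem b hb)
    have hL₀1 : (i:ℤ) ∉ L₀ := by
      rw [hL₀, List.mem_append]
      rintro (h | h)
      · have := listUp_mem _ _ _ h
        push_cast at this
        omega
      · rw [List.mem_map] at h
        obtain ⟨b, hb, hbe⟩ := h
        rw [← hσ'i] at hbe
        have : b = (i:ℤ) := σ'.injective hbe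
        exact havoid i le_rfl (by omega) (this ▸ hb)
    have hL₀2 : ((i:ℤ)+1) ∉ L₀ := by
      rw [hL₀, List.mem_append]
      rintro (h | h)
      · have := listUp_mem _ _ _ h
        push_cast at this
        omega
      · rw [List.mem_map] at h
        obtain ⟨b, hb, hbe⟩ := h
        rw [← hσ'j] at hbe
        have : b = ((j:ℤ)+1) := σ'.injective hbe
        have h2 := havoid (j+1) (by omega) le_rfl
        push_cast at h2
        exact h2 (this ▸ hb)
    rw [hop_step n i hi hii L₀ hmem₀ hL₀1 hL₀2 (σ' * w) (sp_mul n hσ's hw)]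
    congr 1
    · -- list equality
      rw [hL₀, List.map_append, List.map_map]
      have e1 : (listUp (i+1+1) (j+1)).map ⇑(sgen n i) = listUp (i+1+1) (j+1) := by
        rw [show (listUp (i+1+1) (j+1)).map ⇑(sgen n i)
            = (listUp (i+1+1) (j+1)).map id from List.map_congr_left ?_, List.map_id]
        intro a ha
        have := listUp_mem _ _ a ha
        push_cast at this
        rw [sgen_apply n i hi hii]
        split_ifs <;> (try omega)
        rfl
      rw [e1]
      have e2 : ⇑(sgen n i) ∘ ⇑σ' = ⇑(sgen n i * σ') := (Perm.coe_mul _ _).symm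
      rw [e2]
      rw [listUp_cons (i+1) (j+1) (by omega), hcast]
      rfl
/-- for `1 ≤ i ≤ j ≤ n-1`, `w ∈ D_n` and a list `L` of distinct elements of
`±[n]` containing none of `i, …, j+1`,
`(s_i ⋯ s_j) ⋆ h_{j+1,L}(w) = h_{i, [i+1,…,j+1] ++ (s_i⋯s_j)(L)}((s_i ⋯ s_j)·w)`,
where `⋆` is the letterwise extended Demazure action. -/
theorem extended_demazure_hop (n : ℕ) (hn : 2 ≤ n) (i j : ℕ)
    (hi : 1 ≤ i) (hij : i ≤ j) (hj : j ≤ n - 1)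
    (w : Perm ℤ) (hw : IsEvenSignedPerm n w)
    (L : List ℤ) (hnd : L.Nodup) (hmem : ∀ a ∈ L, inPM n a)
    (havoid : ∀ k : ℕ, i ≤ k → k ≤ j + 1 → (k : ℤ) ∉ L) :
    demWord n (List.range' i (j + 1 - i)) (hop n ((j : ℤ) + 1) L w)
      = hop n (i : ℤ)
          (listUp (i + 1) (j + 1) ++ L.map ⇑(wordProd n (List.range' i (j + 1 - i))))
          (wordProd n (List.range' i (j + 1 - i)) * w) :=
  aux_main n hn (j - i) i j hi hij hj rfl w hw.1 L hmem havoid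
end

section
/- Let L be an ordered list of distinct elements of ±[n] containing none of n−1, n, −(n−1), −n. Then for every w ∈ D_n, s_n·( h_{−(n−1), L}( s_n·w ) ) = h_{n, L}(w), where · is the ordinary product. -/
open Equiv

section Aux

lemma myfind_congr {α} (p q : α → Bool) (l : List α) (h : ∀ x ∈ l, p x = q x) :
    l.find? p = l.find? q := by
  induction l with
  | nil => rfl
  | cons a t ih =>
    simp only [List.find?]
    rw [h a List.mem_cons_self]
    cases q a
    · exact ih fun x hx => h x (List.mem_cons_of_mem a hx)
    · rfl

lemma sgen_nn_apply (n : ℕ) (hn : 2 ≤ n) (a : ℤ) :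
    sgen n n a = if a = (n:ℤ) then -((n:ℤ)-1) else if a = -((n:ℤ)-1) then (n:ℤ)
      else if a = (n:ℤ)-1 then -(n:ℤ) else if a = -(n:ℤ) then (n:ℤ)-1 else a := by
  have h2 : (2:ℤ) ≤ (n:ℤ) := by exact_mod_cast hn
  rw [sgen, if_pos rfl]
  simp only [Equiv.Perm.mul_apply, Equiv.swap_apply_def]
  split_ifs <;> omega

lemma sgen_nn_sq (n : ℕ) (hn : 2 ≤ n) : sgen n n * sgen n n = 1 := by
  have h2 : (2:ℤ) ≤ (n:ℤ) := by exact_mod_cast hn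
  ext a
  simp only [Equiv.Perm.mul_apply, Equiv.Perm.one_apply, sgen_nn_apply n hn]
  split_ifs <;> omega

lemma sgen_nn_inv (n : ℕ) (hn : 2 ≤ n) : (sgen n n)⁻¹ = sgen n n :=
  inv_eq_of_mul_eq_one_right (sgen_nn_sq n hn)

lemma sgen_nn_fix (n : ℕ) (hn : 2 ≤ n) (x : ℤ) (e1 : x ≠ (n:ℤ)) (e2 : x ≠ -((n:ℤ)-1))
    (e3 : x ≠ (n:ℤ)-1) (e4 : x ≠ -(n:ℤ)) : sgen n n x = x := by
  rw [sgen_nn_apply n hn]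
  split_ifs <;> omega

lemma sgen_nn_top (n : ℕ) (hn : 2 ≤ n) : sgen n n (n:ℤ) = -((n:ℤ)-1) := by
  have h2 : (2:ℤ) ≤ (n:ℤ) := by exact_mod_cast hn
  rw [sgen_nn_apply n hn]; split_ifs <;> omega

lemma sgen_nn_negtop' (n : ℕ) (hn : 2 ≤ n) : sgen n n (-((n:ℤ)-1)) = (n:ℤ) := by
  have h2 : (2:ℤ) ≤ (n:ℤ) := by exact_mod_cast hn
  rw [sgen_nn_apply n hn]; split_ifs <;> omega

lemma sgen_nn_negn (n : ℕ) (hn : 2 ≤ n) : sgen n n (-(n:ℤ)) = (n:ℤ)-1 := by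
  have h2 : (2:ℤ) ≤ (n:ℤ) := by exact_mod_cast hn
  rw [sgen_nn_apply n hn]; split_ifs <;> omega

theorem hop_conj_aux (n : ℕ) (hn : 2 ≤ n)
    (L : List ℤ) (hmem : ∀ a ∈ L, inPM n a)
    (h1 : (n : ℤ) - 1 ∉ L) (h2 : (n : ℤ) ∉ L)
    (h3 : -((n : ℤ) - 1) ∉ L) (h4 : -(n : ℤ) ∉ L)
    (w : Perm ℤ) :
    sgen n n * hop n (-((n : ℤ) - 1)) L (sgen n n * w) = hop n (n : ℤ) L w := by
  have h2n : (2:ℤ) ≤ (n:ℤ) := by exact_mod_cast hn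
  have hsinv := sgen_nn_inv n hn
  have cancel : ∀ X : Equiv.Perm ℤ, sgen n n * (sgen n n * X) = X := fun X => by
    rw [← mul_assoc, sgen_nn_sq n hn, one_mul]
  have einv : ∀ y : ℤ, (sgen n n * w)⁻¹ y = w⁻¹ (sgen n n y) := by
    intro y; rw [mul_inv_rev, Equiv.Perm.mul_apply, hsinv]
  have hpt : ∀ x ∈ L.reverse,
      (fun q => decide (HopStep n (sgen n n * w) (-((n:ℤ)-1)) q)) x
        = (fun q => decide (HopStep n w (n:ℤ) q)) x := by
    intro x hx
    rw [List.mem_reverse] at hx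
    obtain ⟨hq0, hqb⟩ := hmem x hx
    have hqb' := abs_le.mp hqb
    have hx1 : x ≠ (n:ℤ) - 1 := fun h => h1 (h ▸ hx)
    have hx2 : x ≠ (n:ℤ) := fun h => h2 (h ▸ hx)
    have hx3 : x ≠ -((n:ℤ)-1) := fun h => h3 (h ▸ hx)
    have hx4 : x ≠ -(n:ℤ) := fun h => h4 (h ▸ hx)
    have e1 : (sgen n n * w)⁻¹ (-((n:ℤ)-1)) = w⁻¹ (n:ℤ) := by
      rw [einv, sgen_nn_negtop' n hn]
    have e2 : (sgen n n * w)⁻¹ x = w⁻¹ x := by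
      rw [einv, sgen_nn_fix n hn x hx2 hx3 hx1 hx4]
    have hdlt : dlt n (-((n:ℤ)-1)) x ↔ dlt n (n:ℤ) x := by
      unfold dlt dkey; split_ifs <;> omega
    simp only [decide_eq_decide]
    unfold HopStep
    rw [e1, e2, hdlt]
  have hfind := myfind_congr _ _ L.reverse hpt
  rw [hop, hop, hfind]
  cases hq : L.reverse.find? (fun q => decide (HopStep n w (n:ℤ) q)) with
  | none =>
    dsimp only
    exact cancel w
  | some q =>
    dsimp only
    have hqmem : q ∈ L := List.mem_reverse.mp (List.mem_of_find?_eq_some hq)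
    have hQ : HopStep n w (n:ℤ) q := by
      have := List.find?_some hq
      simpa using this
    obtain ⟨hq0, hqb⟩ := hmem q hqmem
    have hqb' := abs_le.mp hqb
    have hx1 : q ≠ (n:ℤ) - 1 := fun h => h1 (h ▸ hqmem)
    have hx2 : q ≠ (n:ℤ) := fun h => h2 (h ▸ hqmem)
    have hx3 : q ≠ -((n:ℤ)-1) := fun h => h3 (h ▸ hqmem)
    have hx4 : q ≠ -(n:ℤ) := fun h => h4 (h ▸ hqmem)
    have hsq : sgen n n q = q := sgen_nn_fix n hn q hx2 hx3 hx1 hx4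
    have hsnq : sgen n n (-q) = -q :=
      sgen_nn_fix n hn (-q) (by omega) (by omega) (by omega) (by omega)
    have hsw : hswap (-((n:ℤ)-1)) q * (sgen n n * w) = sgen n n * (hswap (n:ℤ) q * w) := by
      have hne : (n:ℤ) ≠ -q := by omega
      have hne' : -((n:ℤ)-1) ≠ -q := by omega
      rw [hswap, if_neg hne', hswap, if_neg hne, neg_neg]
      have c1 : Equiv.swap (-((n:ℤ)-1)) q = sgen n n * Equiv.swap (n:ℤ) q * (sgen n n)⁻¹ := by
        have := Equiv.swap_apply_apply (sgen n n) (n:ℤ) q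
        rwa [sgen_nn_top n hn, hsq] at this
      have c2 : Equiv.swap ((n:ℤ)-1) (-q) = sgen n n * Equiv.swap (-(n:ℤ)) (-q) * (sgen n n)⁻¹ := by
        have := Equiv.swap_apply_apply (sgen n n) (-(n:ℤ)) (-q)
        rwa [sgen_nn_negn n hn, hsnq] at this
      rw [c1, c2, hsinv]
      simp only [mul_assoc, cancel]
    rw [hsw]
    exact hop_conj_aux n hn L hmem h1 h2 h3 h4 (hswap (n:ℤ) q * w)
termination_by (2 * (n:ℤ) + 1 - dkey n (w⁻¹ (n:ℤ))).toNat
decreasing_by exact hop_measure n w (n:ℤ) q hQ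

end Aux

/-- for a list `L` of distinct elements of `±[n]` containing none of
`n-1, n, -(n-1), -n`, and `w ∈ D_n`, `s_n · h_{-(n-1),L}(s_n·w) = h_{n,L}(w)`. -/
theorem hop_conjugate_last_gen (n : ℕ) (hn : 2 ≤ n)
    (L : List ℤ) (hnd : L.Nodup) (hmem : ∀ a ∈ L, inPM n a)
    (h1 : (n : ℤ) - 1 ∉ L) (h2 : (n : ℤ) ∉ L)
    (h3 : -((n : ℤ) - 1) ∉ L) (h4 : -(n : ℤ) ∉ L)
    (w : Perm ℤ) (hw : IsEvenSignedPerm n w) :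
    sgen n n * hop n (-((n : ℤ) - 1)) L (sgen n n * w) = hop n (n : ℤ) L w := by
  exact hop_conj_aux n hn L hmem h1 h2 h3 h4 w
end

section
/- Let 1 ≤ i ≤ n−2 and i < j ≤ n, and let L be any ordered list of distinct elements of ±[n]. Then for every w ∈ D_n, s_j·( h_{i, L}( s_j·w ) ) = h_{i, s_j(L)}(w), where · is the ordinary product. -/
open Equiv

section HopConj

variable {n i j : ℕ}

private lemma sgen_neg' (hn3 : 3 ≤ n) (hj1 : 1 ≤ j) (hj : j ≤ n) (a : ℤ) :
    sgen n j (-a) = -(sgen n j a) := by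
  rcases eq_or_ne j n with rfl | hjn
  · simp only [sgen, reduceIte, Equiv.Perm.mul_apply, Equiv.swap_apply_def]
    split_ifs <;> omega
  · simp only [sgen, if_neg hjn, Equiv.Perm.mul_apply, Equiv.swap_apply_def]
    split_ifs <;> omega

private lemma sgen_mul_self (hn3 : 3 ≤ n) (hj1 : 1 ≤ j) (hj : j ≤ n) :
    sgen n j * sgen n j = 1 := by
  have key : ∀ (a b c d : ℤ), a ≠ c → a ≠ d → b ≠ c → b ≠ d →
      (Equiv.swap a b * Equiv.swap c d) * (Equiv.swap a b * Equiv.swap c d) = 1 := by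
    intro a b c d h1 h2 h3 h4
    have hd : Equiv.Perm.Disjoint (Equiv.swap a b) (Equiv.swap c d) := by
      intro x
      rcases eq_or_ne x a with rfl | hxa
      · right; exact Equiv.swap_apply_of_ne_of_ne h1 h2
      rcases eq_or_ne x b with rfl | hxb
      · right; exact Equiv.swap_apply_of_ne_of_ne h3 h4
      · left; exact Equiv.swap_apply_of_ne_of_ne hxa hxb
    have hc := hd.commute
    calc (Equiv.swap a b * Equiv.swap c d) * (Equiv.swap a b * Equiv.swap c d)
        = Equiv.swap a b * (Equiv.swap c d * Equiv.swap a b) * Equiv.swap c d := by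
          group
      _ = Equiv.swap a b * (Equiv.swap a b * Equiv.swap c d) * Equiv.swap c d := by
          rw [← hc.eq]
      _ = (Equiv.swap a b * Equiv.swap a b) * (Equiv.swap c d * Equiv.swap c d) := by
          group
      _ = 1 := by rw [Equiv.swap_mul_self, Equiv.swap_mul_self, one_mul]
  rcases eq_or_ne j n with rfl | hjn
  · simp only [sgen, reduceIte]
    exact key _ _ _ _ (by omega) (by omega) (by omega) (by omega)
  · simp only [sgen, if_neg hjn]
    exact key _ _ _ _ (by omega) (by omega) (by omega) (by omega)

private lemma sgen_sgen' (hn3 : 3 ≤ n) (hj1 : 1 ≤ j) (hj : j ≤ n) (a : ℤ) :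
    sgen n j (sgen n j a) = a := by
  have h := Equiv.ext_iff.mp (sgen_mul_self hn3 hj1 hj) a
  simpa [Equiv.Perm.mul_apply] using h

private lemma sgen_inv_s13 (hn3 : 3 ≤ n) (hj1 : 1 ≤ j) (hj : j ≤ n) :
    (sgen n j)⁻¹ = sgen n j :=
  inv_eq_of_mul_eq_one_right (sgen_mul_self hn3 hj1 hj)

private lemma sgen_fix (hn3 : 3 ≤ n) (hi1 : 1 ≤ i) (hi2 : i ≤ n - 2) (hij : i < j)
    (hj : j ≤ n) : sgen n j (i : ℤ) = (i : ℤ) := by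
  rcases eq_or_ne j n with rfl | hjn
  · simp only [sgen, reduceIte, Equiv.Perm.mul_apply, Equiv.swap_apply_def]
    split_ifs <;> omega
  · simp only [sgen, if_neg hjn, Equiv.Perm.mul_apply, Equiv.swap_apply_def]
    split_ifs <;> omega

private lemma dkey_nat (h1 : 1 ≤ i) (h2 : i ≤ n) : dkey n (i : ℤ) = (i : ℤ) := by
  unfold dkey; rw [if_pos ⟨by omega, by omega⟩]

private lemma dlt_sgen (hn3 : 3 ≤ n) (hi1 : 1 ≤ i) (hi2 : i ≤ n - 2) (hij : i < j)
    (hj : j ≤ n) (q : ℤ) : dlt n (i : ℤ) (sgen n j q) ↔ dlt n (i : ℤ) q := by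
  unfold dlt
  rw [dkey_nat hi1 (by omega)]
  rcases eq_or_ne j n with rfl | hjn
  · simp only [sgen, dkey, reduceIte, Equiv.Perm.mul_apply, Equiv.swap_apply_def]
    split_ifs <;> omega
  · simp only [sgen, dkey, if_neg hjn, Equiv.Perm.mul_apply, Equiv.swap_apply_def]
    split_ifs <;> omega

private lemma inPM_sgen (hn3 : 3 ≤ n) (hj1 : 1 ≤ j) (hj : j ≤ n) (q : ℤ) :
    inPM n (sgen n j q) ↔ inPM n q := by
  simp only [inPM, abs_le]
  rcases eq_or_ne j n with rfl | hjn
  · simp only [sgen, reduceIte, Equiv.Perm.mul_apply, Equiv.swap_apply_def]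
    split_ifs <;> omega
  · simp only [sgen, if_neg hjn, Equiv.Perm.mul_apply, Equiv.swap_apply_def]
    split_ifs <;> omega

private lemma sgen_hswap (hn3 : 3 ≤ n) (hi1 : 1 ≤ i) (hi2 : i ≤ n - 2) (hij : i < j)
    (hj : j ≤ n) (q : ℤ) :
    sgen n j * hswap (i : ℤ) q * (sgen n j)⁻¹ = hswap (i : ℤ) (sgen n j q) := by
  have hj1 : 1 ≤ j := le_trans hi1 hij.le
  have hneg := sgen_neg' (n := n) (j := j) hn3 hj1 hj
  have hfix := sgen_fix hn3 hi1 hi2 hij hj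
  unfold hswap
  by_cases hc : (i : ℤ) = -q
  · have hq : -q = (i : ℤ) := hc.symm
    have hc' : (i : ℤ) = -(sgen n j q) := by rw [← hneg q, hq, hfix]
    rw [if_pos hc, if_pos hc']
    calc sgen n j * Equiv.swap (i : ℤ) q * (sgen n j)⁻¹
        = Equiv.swap (sgen n j (i : ℤ)) (sgen n j q) := (Equiv.swap_apply_apply _ _ _).symm
      _ = Equiv.swap (i : ℤ) (sgen n j q) := by rw [hfix]
  · have hc' : ¬((i : ℤ) = -(sgen n j q)) := by
      intro h
      apply hc
      rw [← hneg q] at h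
      have h2 := congrArg (sgen n j) h
      rwa [hfix, sgen_sgen' hn3 hj1 hj] at h2
    rw [if_neg hc, if_neg hc']
    calc sgen n j * (Equiv.swap (i : ℤ) q * Equiv.swap (-(i : ℤ)) (-q)) * (sgen n j)⁻¹
        = (sgen n j * Equiv.swap (i : ℤ) q * (sgen n j)⁻¹) *
            (sgen n j * Equiv.swap (-(i : ℤ)) (-q) * (sgen n j)⁻¹) := by group
      _ = Equiv.swap (sgen n j (i : ℤ)) (sgen n j q) *
            Equiv.swap (sgen n j (-(i : ℤ))) (sgen n j (-q)) := by
          rw [← Equiv.swap_apply_apply, ← Equiv.swap_apply_apply]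
      _ = Equiv.swap (i : ℤ) (sgen n j q) * Equiv.swap (-(i : ℤ)) (-(sgen n j q)) := by
          rw [hneg, hneg, hfix]

private lemma hopStep_sgen (hn3 : 3 ≤ n) (hi1 : 1 ≤ i) (hi2 : i ≤ n - 2) (hij : i < j)
    (hj : j ≤ n) (u : Perm ℤ) (q : ℤ) :
    HopStep n (sgen n j * u) (i : ℤ) q ↔ HopStep n u (i : ℤ) (sgen n j q) := by
  have hj1 : 1 ≤ j := le_trans hi1 hij.le
  have hinv := sgen_inv_s13 hn3 hj1 hj
  have h1 : (sgen n j * u)⁻¹ (i : ℤ) = u⁻¹ (i : ℤ) := by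
    rw [mul_inv_rev, Equiv.Perm.mul_apply, hinv, sgen_fix hn3 hi1 hi2 hij hj]
  have h2 : (sgen n j * u)⁻¹ q = u⁻¹ (sgen n j q) := by
    rw [mul_inv_rev, Equiv.Perm.mul_apply, hinv]
  unfold HopStep
  rw [h1, h2, inPM_sgen hn3 hj1 hj, dlt_sgen hn3 hi1 hi2 hij hj]

private lemma hop_of_none {n : ℕ} {t : ℤ} {L : List ℤ} {w : Perm ℤ}
    (h : L.reverse.find? (fun q => decide (HopStep n w t q)) = none) :
    hop n t L w = w := by
  rw [hop.eq_def]
  split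
  · rfl
  · rename_i q heq
    rw [h] at heq
    cases heq

private lemma hop_of_some {n : ℕ} {t : ℤ} {L : List ℤ} {w : Perm ℤ} {q : ℤ}
    (h : L.reverse.find? (fun q => decide (HopStep n w t q)) = some q) :
    hop n t L w = hop n t L (hswap t q * w) := by
  rw [hop.eq_def]
  split
  · rename_i heq
    rw [h] at heq
    cases heq
  · rename_i q' heq
    rw [h] at heq
    injection heq with h'
    rw [h']

private lemma hop_sgen_main (hn3 : 3 ≤ n) (hi1 : 1 ≤ i) (hi2 : i ≤ n - 2) (hij : i < j)
    (hj : j ≤ n) :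
    ∀ (m : ℕ) (L : List ℤ) (u : Perm ℤ),
      (2 * (n : ℤ) + 1 - dkey n (u⁻¹ (i : ℤ))).toNat ≤ m →
      hop n (i : ℤ) (L.map (sgen n j)) u = sgen n j * hop n (i : ℤ) L (sgen n j * u) := by
  have hj1 : 1 ≤ j := le_trans hi1 hij.le
  have hinv := sgen_inv_s13 hn3 hj1 hj
  have hss := sgen_mul_self hn3 hj1 hj
  have h1 : ∀ u : Perm ℤ, (sgen n j * u)⁻¹ (i : ℤ) = u⁻¹ (i : ℤ) := fun u => by
    rw [mul_inv_rev, Equiv.Perm.mul_apply, hinv, sgen_fix hn3 hi1 hi2 hij hj]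
  intro m
  induction m with
  | zero =>
    intro L u hm
    have hnone1 : (L.map (sgen n j)).reverse.find?
        (fun q => decide (HopStep n u (i : ℤ) q)) = none := by
      rw [List.find?_eq_none]
      intro x _
      simp only [decide_eq_true_eq]
      intro hx
      obtain ⟨_, _, h3, h4⟩ := hx
      omega
    have hnone2 : L.reverse.find?
        (fun q => decide (HopStep n (sgen n j * u) (i : ℤ) q)) = none := by
      rw [List.find?_eq_none]
      intro x _
      simp only [decide_eq_true_eq]
      intro hx
      obtain ⟨_, _, h3, h4⟩ := hx
      rw [h1 u] at h3
      omega
    rw [hop_of_none hnone1, hop_of_none hnone2, ← mul_assoc, hss, one_mul]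
  | succ m ih =>
    intro L u hm
    have hpred : ((fun q => decide (HopStep n u (i : ℤ) q)) ∘ (sgen n j))
        = fun q => decide (HopStep n (sgen n j * u) (i : ℤ) q) := by
      funext q
      simp only [Function.comp_apply]
      exact decide_eq_decide.mpr (hopStep_sgen hn3 hi1 hi2 hij hj u q).symm
    have hfind : (L.map (sgen n j)).reverse.find? (fun q => decide (HopStep n u (i : ℤ) q))
        = (L.reverse.find? (fun q => decide (HopStep n (sgen n j * u) (i : ℤ) q))).map
            (sgen n j) := by
      rw [← List.map_reverse, List.find?_map, hpred]
    cases hfind2 : L.reverse.find? (fun q => decide (HopStep n (sgen n j * u) (i : ℤ) q)) with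
    | none =>
      rw [hfind2, Option.map_none] at hfind
      rw [hop_of_none hfind, hop_of_none hfind2, ← mul_assoc, hss, one_mul]
    | some q =>
      rw [hfind2, Option.map_some] at hfind
      have hq : HopStep n (sgen n j * u) (i : ℤ) q := by
        have := List.find?_some hfind2
        simpa using this
      have hq' : HopStep n u (i : ℤ) (sgen n j q) :=
        (hopStep_sgen hn3 hi1 hi2 hij hj u q).mp hq
      rw [hop_of_some hfind, hop_of_some hfind2]
      have harg : hswap (i : ℤ) q * (sgen n j * u)
          = sgen n j * (hswap (i : ℤ) (sgen n j q) * u) := by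
        have hcj := sgen_hswap hn3 hi1 hi2 hij hj q
        have e1 : hswap (i : ℤ) q = (sgen n j)⁻¹ * hswap (i : ℤ) (sgen n j q) * sgen n j := by
          rw [← hcj]; group
        rw [e1, hinv]
        calc (sgen n j * hswap (i : ℤ) (sgen n j q) * sgen n j) * (sgen n j * u)
            = sgen n j * hswap (i : ℤ) (sgen n j q) * (sgen n j * sgen n j) * u := by group
          _ = sgen n j * (hswap (i : ℤ) (sgen n j q) * u) := by rw [hss]; group
      rw [harg]
      have hm' : (2 * (n : ℤ) + 1
          - dkey n ((hswap (i : ℤ) (sgen n j q) * u)⁻¹ (i : ℤ))).toNat ≤ m := by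
        have hlt := hop_measure n u (i : ℤ) (sgen n j q) hq'
        omega
      exact ih L (hswap (i : ℤ) (sgen n j q) * u) hm'

end HopConj

/-- for `1 ≤ i ≤ n-2`, `i < j ≤ n`, any list `L` of distinct elements of
`±[n]`, and `w ∈ D_n`, `s_j · h_{i,L}(s_j·w) = h_{i, s_j(L)}(w)`. -/
theorem hop_conjugate_irrelevant (n : ℕ) (hn : 3 ≤ n) (i j : ℕ)
    (hi : 1 ≤ i) (hi' : i ≤ n - 2) (hij : i < j) (hj : j ≤ n)
    (L : List ℤ) (hnd : L.Nodup) (hmem : ∀ a ∈ L, inPM n a)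
    (w : Perm ℤ) (hw : IsEvenSignedPerm n w) :
    sgen n j * hop n (i : ℤ) L (sgen n j * w) = hop n (i : ℤ) (L.map ⇑(sgen n j)) w := by
  exact (hop_sgen_main hn hi hi' hij hj
    ((2 * (n : ℤ) + 1 - dkey n (w⁻¹ (i : ℤ))).toNat) L w le_rfl).symm
end
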